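/- Let X : ℝ → ℝ be continuously differentiable with X(x) > 0 for all x, and let σ be a one-parameter group of diffeomorphisms generated by X (so σ(0,x) = x, σ(s,σ(t,x)) = σ(s+t,x), and ∂σ/∂t(t,x) = X(σ(t,x))). Fix h ∈ ℝ and let f : ℝ → ℝ be measurable such that x ↦ f(x)/X(x) is integrable on ℝ. Then x ↦ f(σ(h,x))/X(x) is integrable and ∫_ℝ f(σ(h,x))/X(x) dx = ∫_ℝ f(x)/X(x) dx. -/

import Mathlib

open MeasureTheory

/-- Shift invariance of the continuous functional
`F(u) = ∫ f(x)/X(x) dx` under the shift generated by the flow of `X`. -/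
theorem statement1 (X : ℝ → ℝ) (σ : ℝ → ℝ → ℝ) (h : ℝ) (f : ℝ → ℝ)
    (hX : ContDiff ℝ 1 X) (hXpos : ∀ x : ℝ, 0 < X x)
    (hσ0 : ∀ x : ℝ, σ 0 x = x)
    (hgrp : ∀ s t x : ℝ, σ s (σ t x) = σ (s + t) x)
    (hflow : ∀ t x : ℝ, HasDerivAt (fun s => σ s x) (X (σ t x)) t)
    (hf : Measurable f)
    (hint : Integrable (fun x => f x / X x)) :
    Integrable (fun x => f (σ h x) / X x) ∧
      (∫ x : ℝ, f (σ h x) / X x) = ∫ x : ℝ, f x / X x := by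
  have hXne : ∀ x : ℝ, X x ≠ 0 := fun x => (hXpos x).ne'
  have hXcont : Continuous X := hX.continuous
  have hXinv_cont : Continuous fun x => (X x)⁻¹ := hXcont.inv₀ hXne
  -- the "time" function τ
  set τ : ℝ → ℝ := fun x => ∫ t in (0:ℝ)..x, (X t)⁻¹ with hτdef
  have hτderiv : ∀ x : ℝ, HasDerivAt τ (X x)⁻¹ x := by
    intro x
    exact intervalIntegral.integral_hasDerivAt_right
      (hXinv_cont.intervalIntegrable 0 x)
      (hXinv_cont.stronglyMeasurableAtFilter _ _)
      hXinv_cont.continuousAt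
  have hτmono : StrictMono τ :=
    strictMono_of_deriv_pos (fun x => by
      rw [(hτderiv x).deriv]; exact inv_pos.2 (hXpos x))
  -- τ conjugates the flow to translation: τ (σ t x) = τ x + t
  have key : ∀ t x : ℝ, τ (σ t x) = τ x + t := by
    intro t x
    have hconst : ∀ t : ℝ, τ (σ t x) - t = τ x := by
      have hd : ∀ s : ℝ, HasDerivAt (fun u => τ (σ u x) - u) 0 s := by
        intro s
        have h1 : HasDerivAt (fun u => τ (σ u x)) ((X (σ s x))⁻¹ * X (σ s x)) s :=
          by have := (hτderiv (σ s x)).comp s (hflow s x); exact this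
        have h2 : HasDerivAt (fun u => τ (σ u x) - u)
            ((X (σ s x))⁻¹ * X (σ s x) - 1) s := h1.sub (hasDerivAt_id s)
        simpa [inv_mul_cancel₀ (hXne (σ s x))] using h2
      have := is_const_of_deriv_eq_zero (fun s => (hd s).differentiableAt)
        (fun s => (hd s).deriv)
      intro t
      have := this t 0
      simpa [hσ0 x] using this
    linarith [hconst t]
  -- τ is surjective
  have hτsurj : Function.Surjective τ := by
    intro y
    refine ⟨σ (y - τ 0) 0, ?_⟩
    rw [key]; ring
  set e : ℝ ≃o ℝ := StrictMono.orderIsoOfSurjective τ hτmono hτsurj with he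
  have heapp : ∀ x : ℝ, e x = τ x := fun _ => rfl
  have hsymm : ∀ x : ℝ, e.symm (τ x) = x := fun x => e.symm_apply_apply x
  -- identify σ h with τ⁻¹ ∘ (· + h) ∘ τ
  have hg_eq : ∀ x : ℝ, σ h x = e.symm (τ x + h) := by
    intro x
    have : τ (σ h x) = τ x + h := key h x
    have := congrArg e.symm this
    rwa [hsymm] at this
  -- derivative of σ h
  have hginv : ∀ x : ℝ, σ (-h) (σ h x) = x := by
    intro x; rw [hgrp]; simp [hσ0]
  have hginv' : ∀ x : ℝ, σ h (σ (-h) x) = x := by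
    intro x; rw [hgrp]; simp [hσ0]
  have hsymm_deriv : ∀ y : ℝ, HasDerivAt e.symm (X (e.symm y)) y := by
    intro y
    have h1 : HasDerivAt τ (X (e.symm y))⁻¹ (e.symm y) := hτderiv _
    have h2 : ∀ᶠ z in nhds y, τ (e.symm z) = z :=
      Filter.Eventually.of_forall (fun z => e.apply_symm_apply z)
    have := HasDerivAt.of_local_left_inverse (e.symm.continuous.continuousAt) h1
      (inv_ne_zero (hXne _)) h2
    simpa using this
  have hgderiv : ∀ x : ℝ, HasDerivAt (fun x => σ h x) (X (σ h x) / X x) x := by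
    intro x
    have hinner : HasDerivAt (fun x => τ x + h) (X x)⁻¹ x :=
      (hτderiv x).add_const h
    have houter : HasDerivAt e.symm (X (e.symm (τ x + h))) (τ x + h) :=
      hsymm_deriv _
    have hcomp := (houter.comp x hinner).congr_of_eventuallyEq
      (Filter.Eventually.of_forall (fun z => (hg_eq z)))
    rw [← hg_eq x] at hcomp
    simpa [div_eq_mul_inv] using hcomp
  -- change of variables
  have hinj : Function.Injective (σ h) := by
    intro a b hab
    have := congrArg (σ (-h)) hab
    rwa [hginv, hginv] at this
  have hsurjg : Function.Surjective (σ h) := fun y => ⟨σ (-h) y, hginv' y⟩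
  have himg : (σ h) '' Set.univ = Set.univ := by
    rw [Set.image_univ]; exact hsurjg.range_eq
  have hderivW : ∀ x ∈ (Set.univ : Set ℝ),
      HasDerivWithinAt (σ h) (X (σ h x) / X x) Set.univ x :=
    fun x _ => (hgderiv x).hasDerivWithinAt
  have hinjOn : Set.InjOn (σ h) Set.univ := hinj.injOn
  have hptwise : ∀ x : ℝ,
      |X (σ h x) / X x| • (f (σ h x) / X (σ h x)) = f (σ h x) / X x := by
    intro x
    rw [abs_of_pos (div_pos (hXpos _) (hXpos _)), smul_eq_mul,
      div_mul_div_comm, mul_comm (X x) (X (σ h x)),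
      mul_div_mul_left _ _ (hXne (σ h x))]
  constructor
  · have := (integrableOn_image_iff_integrableOn_abs_deriv_smul
      MeasurableSet.univ hderivW hinjOn (fun y => f y / X y)).1 ?_
    · have : IntegrableOn (fun x => |X (σ h x) / X x| • (f (σ h x) / X (σ h x)))
          Set.univ := this
      rw [← integrableOn_univ]
      refine this.congr_fun (fun x _ => hptwise x) MeasurableSet.univ
    · rw [himg]
      simpa [IntegrableOn] using hint
  · have := integral_image_eq_integral_abs_deriv_smul
      MeasurableSet.univ hderivW hinjOn (fun y => f y / X y)
    rw [himg] at this
    simp only [Measure.restrict_univ] at this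
    rw [this]
    exact integral_congr_ae (Filter.Eventually.of_forall (fun x => (hptwise x).symm))
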